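/- Upper bound on guesswork for BB84 states: for the uniform ensemble of the four BB84 qubit states \{|0\rangle, |1\rangle, |+\rangle, |-\rangle\}, the guesswork with quantum side information satisfies G(X|B) \leq \frac{1}{4}(10 - \sqrt{10}), achieved by a projective measurement \{|\theta\rangle\langle\theta|, |\theta^\perp\rangle\langle\theta^\perp|\} with \theta = \frac{1}{2}\arctan(1/3) and |\theta\rangle = \sin\theta |0\rangle + \cos\theta |1\rangle, using guessing orders (1,+,-,0) and (0,-,+,1) respectively. Concretely, for this measurement and these guessing orders the expected number of guesses equals 1.75 + \frac{3}{2}\sin^2\theta - \frac{1}{4}\sin 2\theta, whose minimum over \theta is \frac{1}{4}(10-\sqrt{10}). -/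

import Mathlib

open Matrix ComplexOrder

/-- The four BB84 states `|0⟩, |1⟩, |+⟩, |−⟩` as vectors in `ℂ²`. -/
noncomputable def bb84 : Fin 4 → Fin 2 → ℂ :=
  ![![1, 0], ![0, 1],
    ![((Real.sqrt 2 : ℝ) : ℂ)⁻¹, ((Real.sqrt 2 : ℝ) : ℂ)⁻¹],
    ![((Real.sqrt 2 : ℝ) : ℂ)⁻¹, -((Real.sqrt 2 : ℝ) : ℂ)⁻¹]]

/-- The rank-one projector `|ψ_k⟩⟨ψ_k|` onto the `k`-th BB84 state. -/
noncomputable def bb84Proj (k : Fin 4) : Matrix (Fin 2) (Fin 2) ℂ :=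
  Matrix.vecMulVec (bb84 k) (star (bb84 k))

/-- The cost operator `R_g = (1/4) ∑_k N(g,k) |ψ_k⟩⟨ψ_k|`, where `N(g,k) = g⁻¹(k)+1`
is the position of `k` in the guessing order `g`. -/
noncomputable def bb84R (g : Equiv.Perm (Fin 4)) : Matrix (Fin 2) (Fin 2) ℂ :=
  (4 : ℂ)⁻¹ • ∑ k : Fin 4, ((((g.symm k : ℕ) + 1 : ℕ) : ℂ)) • bb84Proj k

/-- The guesswork with quantum side information for the uniform BB84 ensemble:
infimum over POVMs indexed by guessing orders of the expected number of guesses. -/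
noncomputable def bb84Guesswork : ℝ :=
  ⨅ E : {E : Equiv.Perm (Fin 4) → Matrix (Fin 2) (Fin 2) ℂ //
      (∀ g, (E g).PosSemidef) ∧ ∑ g, E g = 1},
    (∑ g : Equiv.Perm (Fin 4), (bb84R g * E.1 g).trace).re

/-- The guessing order `(1,+,−,0)`, used for the outcome `|θ⟩⟨θ|`. -/
def bb84OrderA : Equiv.Perm (Fin 4) := ⟨![1, 2, 3, 0], ![3, 0, 1, 2], by decide, by decide⟩

/-- The guessing order `(0,−,+,1)`, used for the outcome `|θ^⊥⟩⟨θ^⊥|`. -/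
def bb84OrderB : Equiv.Perm (Fin 4) := ⟨![0, 3, 2, 1], ![0, 3, 2, 1], by decide, by decide⟩

/-- The measurement vector `|θ⟩ = sin θ |0⟩ + cos θ |1⟩`. -/
noncomputable def thetaVec (θ : ℝ) : Fin 2 → ℂ := ![(Real.sin θ : ℂ), (Real.cos θ : ℂ)]

/-- The orthogonal vector `|θ^⊥⟩ = cos θ |0⟩ − sin θ |1⟩`. -/
noncomputable def thetaVecPerp (θ : ℝ) : Fin 2 → ℂ := ![(Real.cos θ : ℂ), -(Real.sin θ : ℂ)]

lemma h2c : ((Real.sqrt 2 : ℝ) : ℂ) * ((Real.sqrt 2 : ℝ) : ℂ) = 2 := by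
  norm_cast
  exact_mod_cast Real.mul_self_sqrt (by norm_num)

lemma h2sq : ((Real.sqrt 2 : ℝ) : ℂ) ^ 2 = 2 := by rw [sq]; exact h2c

lemma hRA : bb84R bb84OrderA = !![13/8, -1/8; -1/8, 7/8] := by
  ext i j
  fin_cases i <;> fin_cases j <;>
    simp [bb84R, bb84Proj, bb84, bb84OrderA, Matrix.vecMulVec_apply,
        Fin.sum_univ_four, Matrix.sum_apply, -Matrix.cons_vecMulVec] <;> ring_nf <;>
    norm_num [h2sq, show ((3:Fin 4):ℕ) = 3 from rfl]

lemma hRB : bb84R bb84OrderB = !![7/8, 1/8; 1/8, 13/8] := by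
  ext i j
  fin_cases i <;> fin_cases j <;>
    simp [bb84R, bb84Proj, bb84, bb84OrderB, Matrix.vecMulVec_apply,
        Fin.sum_univ_four, Matrix.sum_apply, -Matrix.cons_vecMulVec] <;> ring_nf <;>
    norm_num [h2sq, show ((3:Fin 4):ℕ) = 3 from rfl]

lemma traceKey (θ : ℝ) :
    (bb84R bb84OrderA * Matrix.vecMulVec (thetaVec θ) (star (thetaVec θ))).trace +
      (bb84R bb84OrderB *
        Matrix.vecMulVec (thetaVecPerp θ) (star (thetaVecPerp θ))).trace =
      ((1.75 + (3 / 2) * Real.sin θ ^ 2 - (1 / 4) * Real.sin (2 * θ) : ℝ) : ℂ) := by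
  rw [hRA, hRB]
  simp [Matrix.trace, Matrix.mul_apply, Matrix.vecMulVec_apply, Fin.sum_univ_two,
    thetaVec, thetaVecPerp, Matrix.diag, Pi.star_apply, Complex.star_def,
    Complex.conj_ofReal, -Matrix.cons_vecMulVec]
  have h175 : ((1.75 : ℝ) : ℂ) = 7/4 := by norm_num
  push_cast [Real.sin_two_mul, h175]
  simp only [← Complex.sin_conj, ← Complex.cos_conj, Complex.conj_ofReal,
    Complex.sin_two_mul]
  linear_combination (7/4 : ℂ) * Complex.sin_sq_add_cos_sq ↑θ

lemma traceRe (θ : ℝ) :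
    ((bb84R bb84OrderA * Matrix.vecMulVec (thetaVec θ) (star (thetaVec θ))).trace +
      (bb84R bb84OrderB *
        Matrix.vecMulVec (thetaVecPerp θ) (star (thetaVecPerp θ))).trace).re =
      1.75 + (3 / 2) * Real.sin θ ^ 2 - (1 / 4) * Real.sin (2 * θ) := by
  rw [traceKey, Complex.ofReal_re]

lemma psd_vecMulVec (v : Fin 2 → ℂ) : (Matrix.vecMulVec v (star v)).PosSemidef := by
  rw [Matrix.vecMulVec_eq Unit, ← Matrix.conjTranspose_replicateCol]
  exact Matrix.posSemidef_self_mul_conjTranspose _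

lemma psd_diag_re_nonneg {n : ℕ} {M : Matrix (Fin n) (Fin n) ℂ} (hM : M.PosSemidef)
    (i : Fin n) : 0 ≤ (M i i).re := by
  have := hM.re_dotProduct_nonneg (Pi.single i 1)
  simpa [dotProduct, Matrix.mulVec, Pi.single_apply, Finset.sum_ite_eq,
    Finset.mul_sum, mul_ite] using this

lemma trace_mul_re_nonneg {n : ℕ} {A B : Matrix (Fin n) (Fin n) ℂ}
    (hA : A.PosSemidef) (hB : B.PosSemidef) : 0 ≤ ((A * B).trace).re := by
  obtain ⟨C, rfl⟩ : ∃ C : Matrix (Fin n) (Fin n) ℂ, B = Cᴴ * C := by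
    open scoped MatrixOrder in exact CStarAlgebra.nonneg_iff_eq_star_mul_self.mp hB.nonneg
  have h1 : (A * (Cᴴ * C)).trace = (C * A * Cᴴ).trace := by
    rw [← mul_assoc, Matrix.trace_mul_comm, ← mul_assoc]
  rw [h1]
  have hM : (C * A * Cᴴ).PosSemidef := hA.mul_mul_conjTranspose_same C
  rw [Matrix.trace, Complex.re_sum]
  exact Finset.sum_nonneg fun i _ => psd_diag_re_nonneg hM i

lemma psd_real_smul {n : ℕ} {M : Matrix (Fin n) (Fin n) ℂ} (hM : M.PosSemidef)
    {c : ℝ} (hc : 0 ≤ c) : (((c : ℂ)) • M).PosSemidef := by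
  refine ⟨?_, fun x => ?_⟩
  · show (((c : ℂ)) • M)ᴴ = _
    rw [Matrix.conjTranspose_smul, hM.1]
    simp [Complex.conj_ofReal]
  · have := mul_nonneg (Complex.zero_le_real.mpr hc) (hM.2 x)
    simp only [Finsupp.sum, Finset.mul_sum, Matrix.smul_apply, smul_eq_mul] at this ⊢
    refine le_of_le_of_eq this ?_
    exact Finset.sum_congr rfl fun i _ => Finset.sum_congr rfl fun j _ => by ring

lemma bb84R_psd (g : Equiv.Perm (Fin 4)) : (bb84R g).PosSemidef := by
  unfold bb84R
  rw [show ((4 : ℂ))⁻¹ = (((4⁻¹ : ℝ) : ℝ) : ℂ) by norm_num]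
  refine psd_real_smul ?_ (by norm_num)
  refine Finset.sum_induction _ _ (fun a b ha hb => ha.add hb) Matrix.PosSemidef.zero
    (fun k _ => ?_)
  rw [show ((((g.symm k : ℕ) + 1 : ℕ) : ℂ)) = ((((g.symm k : ℕ) + 1 : ℕ) : ℝ) : ℂ) by
    push_cast; ring]
  exact psd_real_smul (psd_vecMulVec _) (by positivity)

noncomputable def povm (θ : ℝ) (g : Equiv.Perm (Fin 4)) : Matrix (Fin 2) (Fin 2) ℂ :=
  (if g = bb84OrderA then Matrix.vecMulVec (thetaVec θ) (star (thetaVec θ)) else 0) +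
  (if g = bb84OrderB then Matrix.vecMulVec (thetaVecPerp θ) (star (thetaVecPerp θ)) else 0)

lemma povm_psd (θ : ℝ) (g : Equiv.Perm (Fin 4)) : (povm θ g).PosSemidef := by
  unfold povm
  refine Matrix.PosSemidef.add ?_ ?_ <;> split <;>
    first
      | exact psd_vecMulVec _
      | exact Matrix.PosSemidef.zero

lemma orders_ne : bb84OrderA ≠ bb84OrderB := by
  intro h
  have := congrArg (fun e => e.toFun 0) h
  simp [bb84OrderA, bb84OrderB] at this

lemma povm_sum (θ : ℝ) : ∑ g, povm θ g = 1 := by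
  unfold povm
  rw [Finset.sum_add_distrib, Finset.sum_ite_eq' Finset.univ, Finset.sum_ite_eq' Finset.univ]
  simp only [Finset.mem_univ, if_true]
  ext i j
  fin_cases i <;> fin_cases j <;>
    simp [Matrix.vecMulVec_apply, thetaVec, thetaVecPerp, Matrix.one_apply,
      Complex.star_def, Complex.conj_ofReal, -Matrix.cons_vecMulVec] <;>
    · push_cast
      try simp only [← Complex.sin_conj, ← Complex.cos_conj, Complex.conj_ofReal]
      first
        | ring1
        | linear_combination Complex.sin_sq_add_cos_sq (θ : ℂ)
        | linear_combination (-1 : ℂ) * Complex.sin_sq_add_cos_sq (θ : ℂ)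
        | linear_combination (2 : ℂ) * Complex.sin_sq_add_cos_sq (θ : ℂ)
        | linear_combination (-2 : ℂ) * Complex.sin_sq_add_cos_sq (θ : ℂ)

lemma povm_value (θ : ℝ) :
    (∑ g : Equiv.Perm (Fin 4), (bb84R g * povm θ g).trace).re =
      1.75 + (3 / 2) * Real.sin θ ^ 2 - (1 / 4) * Real.sin (2 * θ) := by
  have : ∑ g : Equiv.Perm (Fin 4), (bb84R g * povm θ g).trace =
      (bb84R bb84OrderA * Matrix.vecMulVec (thetaVec θ) (star (thetaVec θ))).trace +
      (bb84R bb84OrderB *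
        Matrix.vecMulVec (thetaVecPerp θ) (star (thetaVecPerp θ))).trace := by
    unfold povm
    simp only [mul_add, Matrix.trace_add, Finset.sum_add_distrib, mul_ite, mul_zero,
      apply_ite Matrix.trace, Matrix.trace_zero, Finset.sum_ite_eq' Finset.univ,
      Finset.mem_univ, if_true]
  rw [this]
  exact traceRe θ

theorem bb84_guesswork_upper_bound :
    (∀ θ : ℝ,
      ((bb84R bb84OrderA * Matrix.vecMulVec (thetaVec θ) (star (thetaVec θ))).trace +
        (bb84R bb84OrderB *
          Matrix.vecMulVec (thetaVecPerp θ) (star (thetaVecPerp θ))).trace).re =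
        1.75 + (3 / 2) * Real.sin θ ^ 2 - (1 / 4) * Real.sin (2 * θ)) ∧
    bb84Guesswork ≤ (10 - Real.sqrt 10) / 4 := by
  refine ⟨traceRe, ?_⟩
  set a := Real.arctan (1/3) with ha
  set θ := a / 2 with hθ
  have hbdd : BddBelow (Set.range fun E : {E : Equiv.Perm (Fin 4) → Matrix (Fin 2) (Fin 2) ℂ //
      (∀ g, (E g).PosSemidef) ∧ ∑ g, E g = 1} =>
      (∑ g : Equiv.Perm (Fin 4), (bb84R g * E.1 g).trace).re) := by
    refine ⟨0, ?_⟩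
    rintro _ ⟨E, rfl⟩
    show (0:ℝ) ≤ (∑ g : Equiv.Perm (Fin 4), (bb84R g * E.1 g).trace).re
    rw [Complex.re_sum]
    exact Finset.sum_nonneg fun g _ => trace_mul_re_nonneg (bb84R_psd g) (E.2.1 g)
  have hle : bb84Guesswork ≤
      (∑ g : Equiv.Perm (Fin 4), (bb84R g * povm θ g).trace).re :=
    ciInf_le hbdd ⟨povm θ, povm_psd θ, povm_sum θ⟩
  refine hle.trans ?_
  rw [povm_value]
  -- now evaluate at θ = arctan(1/3)/2
  have h2θ : 2 * θ = a := by rw [hθ]; ring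
  have hsqrt10 : (0:ℝ) < Real.sqrt 10 := Real.sqrt_pos.mpr (by norm_num)
  have h10 : Real.sqrt 10 * Real.sqrt 10 = 10 := Real.mul_self_sqrt (by norm_num)
  have hden : Real.sqrt (1 + (1/3 : ℝ)^2) = Real.sqrt 10 / 3 := by
    rw [show (1 + (1/3 : ℝ)^2) = 10/9 by norm_num,
      show (10/9 : ℝ) = (Real.sqrt 10 / 3)^2 by
        rw [div_pow, Real.sq_sqrt (by norm_num : (0:ℝ) ≤ 10)]; norm_num]
    exact Real.sqrt_sq (by positivity)
  have hsina : Real.sin a = Real.sqrt 10 / 10 := by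
    rw [ha, Real.sin_arctan, hden]
    field_simp
    try nlinarith [h10, hsqrt10]
  have hcosa : Real.cos a = 3 * Real.sqrt 10 / 10 := by
    rw [ha, Real.cos_arctan, hden]
    field_simp
    try nlinarith [h10, hsqrt10]
  have hsinsq : Real.sin θ ^ 2 = (1 - Real.cos a) / 2 := by
    have h := Real.cos_two_mul θ
    rw [h2θ] at h
    have hp := Real.sin_sq_add_cos_sq θ
    nlinarith [h, hp]
  rw [h2θ, hsina, hsinsq, hcosa]
  nlinarith [h10, hsqrt10]
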